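/- The Lobachevsky function Λ(x) = -∫₀ˣ log|2 sin u| du satisfies Λ''(x) = -cot(x) for x ∈ (0, π), and the function F(α, β, γ) = Λ(α) + Λ(β) + Λ(γ) restricted to the simplex {α + β + γ = π, α, β, γ > 0} is strictly concave; equivalently, the Hessian of F restricted to the tangent space {(a,b,c) : a + b + c = 0} is negative definite at each interior point. -/

import Mathlib

open MeasureTheory Real Set

lemma myIntegrableOn_neg_log :
    IntegrableOn (fun u : ℝ => -Real.log u) (Set.Ioc 0 1) := by
  apply intervalIntegral.integrableOn_deriv_of_nonneg (g := fun u : ℝ => u - u * Real.log u)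
  · exact (continuous_id.sub Real.continuous_mul_log).continuousOn
  · intro u hu
    have h := (hasDerivAt_id u).sub ((hasDerivAt_id u).mul (Real.hasDerivAt_log hu.1.ne'))
    refine h.congr_deriv ?_
    simp only [id_eq, one_mul, mul_inv_cancel₀ hu.1.ne']
    ring
  · intro u hu
    simp only [neg_nonneg]
    exact Real.log_nonpos hu.1.le hu.2.le

lemma myIntervalIntegrable (y : ℝ) (hy : y ∈ Set.Ioo 0 Real.pi) :
    IntervalIntegrable (fun u => Real.log |2 * Real.sin u|) volume 0 y := by
  set f : ℝ → ℝ := fun u => Real.log |2 * Real.sin u| with hfdef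
  have hmeas : Measurable f :=
    Real.measurable_log.comp ((measurable_const.mul Real.measurable_sin).abs)
  set m : ℝ := min y 1 with hmdef
  have hm0 : 0 < m := lt_min hy.1 one_pos
  have hm1 : m ≤ 1 := min_le_right _ _
  have hmy : m ≤ y := min_le_left _ _
  have hpi2 : (1 : ℝ) ≤ Real.pi / 2 := by
    have := Real.pi_gt_three; linarith
  -- integrable near 0 by comparison with -log u + 1
  have hI1 : IntegrableOn f (Set.Ioc 0 m) := by
    apply Integrable.mono' (g := fun u : ℝ => -Real.log u + 1)
    · exact ((myIntegrableOn_neg_log.mono_set (Set.Ioc_subset_Ioc_right hm1)).add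
        (integrableOn_const measure_Ioc_lt_top.ne))
    · exact (hmeas.aestronglyMeasurable).restrict
    · filter_upwards [ae_restrict_mem measurableSet_Ioc] with u hu
      have hu0 : 0 < u := hu.1
      have hu1 : u ≤ 1 := hu.2.trans hm1
      have hsin : 0 < Real.sin u := Real.sin_pos_of_pos_of_lt_pi hu0
        (lt_of_le_of_lt (hu1.trans hpi2) (by linarith [Real.pi_pos]))
      have habs : |2 * Real.sin u| = 2 * Real.sin u := abs_of_pos (by positivity)
      have hjordan : 2 / Real.pi * u ≤ Real.sin u :=
        Real.mul_le_sin hu0.le (hu1.trans hpi2)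
      have hsinlt : Real.sin u < u := Real.sin_lt hu0
      rw [Real.norm_eq_abs, abs_le]
      constructor
      · -- lower bound: log u ≤ f u, i.e. -(... ) ≤ f u
        have h1 : Real.log u ≤ Real.log (2 * Real.sin u) := by
          have h2 : u ≤ 2 * Real.sin u := by
            have hπ4 : Real.pi ≤ 4 := Real.pi_le_four
            have : 2 * (2 / Real.pi * u) ≤ 2 * Real.sin u := by linarith
            have h3 : u ≤ 2 * (2 / Real.pi * u) := by
              rw [show 2 * (2 / Real.pi * u) = u * 4 / Real.pi by ring, le_div_iff₀ Real.pi_pos]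
              nlinarith [mul_le_mul_of_nonneg_left hπ4 hu0.le]
            linarith
          exact Real.log_le_log hu0 h2
        simp only [hfdef, habs]
        linarith
      · -- upper bound: f u ≤ log 2 + log u ≤ 1 ≤ -log u + 1
        have h1 : Real.log (2 * Real.sin u) ≤ Real.log 2 := by
          apply Real.log_le_log (by positivity)
          nlinarith [Real.sin_le_one u]
        have hlog2 : Real.log 2 < 1 := by
          have := Real.log_two_lt_d9; linarith
        have hlogu : Real.log u ≤ 0 := Real.log_nonpos hu0.le hu1
        simp only [hfdef, habs]
        linarith
  have hI2 : IntervalIntegrable f volume m y := by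
    apply ContinuousOn.intervalIntegrable
    intro u hu
    rw [Set.uIcc_of_le hmy] at hu
    have hsin : 0 < Real.sin u := Real.sin_pos_of_pos_of_lt_pi (lt_of_lt_of_le hm0 hu.1)
      (lt_of_le_of_lt hu.2 hy.2)
    have : |2 * Real.sin u| ≠ 0 := by positivity
    exact (((continuous_const.mul Real.continuous_sin).abs.continuousAt).log this).continuousWithinAt
  have hI1' : IntervalIntegrable f volume 0 m := by
    rw [intervalIntegrable_iff_integrableOn_Ioc_of_le hm0.le]
    exact hI1
  exact hI1'.trans hI2

lemma myDeriv (Λ : ℝ → ℝ)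
    (hΛ : ∀ x : ℝ, Λ x = -∫ u in (0:ℝ)..x, Real.log |2 * Real.sin u|) :
    ∀ x ∈ Set.Ioo (0:ℝ) Real.pi,
      deriv (deriv Λ) x = -(Real.cos x / Real.sin x) := by
  set f : ℝ → ℝ := fun u => Real.log |2 * Real.sin u| with hfdef
  have hmeas : Measurable f :=
    Real.measurable_log.comp ((measurable_const.mul Real.measurable_sin).abs)
  have hΛ' : Λ = fun x => -∫ u in (0:ℝ)..x, f u := funext hΛ
  have hd : ∀ t ∈ Set.Ioo (0:ℝ) Real.pi, HasDerivAt Λ (-(f t)) t := by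
    intro t ht
    have hsin : 0 < Real.sin t := Real.sin_pos_of_pos_of_lt_pi ht.1 ht.2
    have hne : |2 * Real.sin t| ≠ 0 := by positivity
    have hcont : ContinuousAt f t :=
      ((continuous_const.mul Real.continuous_sin).abs.continuousAt).log hne
    have h1 : HasDerivAt (fun x => ∫ u in (0:ℝ)..x, f u) (f t) t :=
      intervalIntegral.integral_hasDerivAt_right (myIntervalIntegrable t ht)
        (hmeas.stronglyMeasurable.stronglyMeasurableAtFilter) hcont
    rw [hΛ']
    exact h1.neg
  intro x hx
  have hev : deriv Λ =ᶠ[nhds x] fun t => -Real.log (2 * Real.sin t) := by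
    filter_upwards [isOpen_Ioo.mem_nhds hx] with t ht
    have hsin : 0 < Real.sin t := Real.sin_pos_of_pos_of_lt_pi ht.1 ht.2
    rw [(hd t ht).deriv]
    simp only [hfdef, abs_of_pos (by positivity : (0:ℝ) < 2 * Real.sin t)]
  rw [hev.deriv_eq]
  have hsin : 0 < Real.sin x := Real.sin_pos_of_pos_of_lt_pi hx.1 hx.2
  have hg : HasDerivAt (fun t => -Real.log (2 * Real.sin t))
      (-(2 * Real.cos x / (2 * Real.sin x))) x :=
    (((Real.hasDerivAt_sin x).const_mul 2).log (by positivity)).neg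
  rw [hg.deriv]
  field_simp


theorem lobachevsky_second_deriv_and_concavity
    (Λ : ℝ → ℝ)
    (hΛ : ∀ x : ℝ, Λ x = -∫ u in (0:ℝ)..x, Real.log |2 * Real.sin u|) :
    (∀ x ∈ Set.Ioo (0:ℝ) Real.pi,
        deriv (deriv Λ) x = -(Real.cos x / Real.sin x)) ∧
    (∀ α β γ : ℝ, α ∈ Set.Ioo 0 Real.pi → β ∈ Set.Ioo 0 Real.pi →
      γ ∈ Set.Ioo 0 Real.pi → α + β + γ = Real.pi →
      ∀ a b c : ℝ, a + b + c = 0 → (a, b, c) ≠ 0 →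
        a ^ 2 * (-(Real.cos α / Real.sin α)) + b ^ 2 * (-(Real.cos β / Real.sin β)) +
          c ^ 2 * (-(Real.cos γ / Real.sin γ)) < 0) := by
  refine ⟨myDeriv Λ hΛ, ?_⟩
  intro α β γ hα hβ hγ hsum a b c habc hne
  have hsa : 0 < Real.sin α := Real.sin_pos_of_pos_of_lt_pi hα.1 hα.2
  have hsb : 0 < Real.sin β := Real.sin_pos_of_pos_of_lt_pi hβ.1 hβ.2
  have hsc : 0 < Real.sin γ := Real.sin_pos_of_pos_of_lt_pi hγ.1 hγ.2
  set x := Real.cos α / Real.sin α with hxdef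
  set y := Real.cos β / Real.sin β with hydef
  set z := Real.cos γ / Real.sin γ with hzdef
  have hxz : 0 < x + z := by
    have h1 : x + z = Real.sin (α + γ) / (Real.sin α * Real.sin γ) := by
      rw [Real.sin_add, hxdef, hzdef]
      field_simp
      ring
    rw [h1, show α + γ = Real.pi - β by linarith, Real.sin_pi_sub]
    positivity
  have key2 : x * y + y * z + z * x = 1 := by
    have hsinγ : Real.sin γ = Real.sin α * Real.cos β + Real.cos α * Real.sin β := by
      rw [show γ = Real.pi - (α + β) by linarith, Real.sin_pi_sub, Real.sin_add]
    have hcosγ : Real.cos γ = -(Real.cos α * Real.cos β - Real.sin α * Real.sin β) := by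
      rw [show γ = Real.pi - (α + β) by linarith, Real.cos_pi_sub, Real.cos_add]
    rw [hxdef, hydef, hzdef]
    field_simp
    rw [hsinγ, hcosγ]
    ring
  have hc : c = -a - b := by linarith
  have hkey : (x + z) * (a ^ 2 * x + b ^ 2 * y + c ^ 2 * z)
      = ((x + z) * a + z * b) ^ 2 + b ^ 2 * (x * y + y * z + z * x) := by
    rw [hc]; ring
  rw [key2, mul_one] at hkey
  have hab : a ≠ 0 ∨ b ≠ 0 := by
    by_contra h
    push_neg at h
    exact hne (by simp [Prod.ext_iff, h.1, h.2, hc])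
  have hpos : 0 < ((x + z) * a + z * b) ^ 2 + b ^ 2 := by
    rcases eq_or_ne b 0 with hb | hb
    · subst hb
      rcases hab with ha | hb'
      · have : 0 < (x + z) ^ 2 * a ^ 2 := by positivity
        nlinarith [this]
      · exact absurd rfl hb'
    · have : 0 < b ^ 2 := by positivity
      nlinarith [sq_nonneg ((x + z) * a + z * b)]
  have hQ : 0 < a ^ 2 * x + b ^ 2 * y + c ^ 2 * z := by
    by_contra h
    push_neg at h
    nlinarith
  linarith [hQ]
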